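/- Let N ≥ 1, M > 0, and let x, y ∈ ℝ^N satisfy 0 ≤ x_n ≤ M and 0 ≤ y_n ≤ M for all n. Then d^N(x, y) ≤ d_GH(K_x, K_y), where K_x and K_y are regarded as nonempty compact metric subspaces of ℝ² with the Chebyshev distance and d_GH is the Gromov–Hausdorff distance. -/

import Mathlib

noncomputable def box (M : ℝ) (n : ℕ) : Set (ℝ × ℝ) :=
  Set.Icc (4 * M + 10 * M * (n : ℝ)) (4 * M + 10 * M * (n : ℝ) + 2 * M) ×ˢ Set.Icc (-M) M

noncomputable def pp {N : ℕ} (M : ℝ) (z : Fin N → ℝ) (n : Fin N) : ℝ × ℝ :=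
  (10 * M * ((n : ℕ) : ℝ), z n)

noncomputable def pm {N : ℕ} (M : ℝ) (z : Fin N → ℝ) (n : Fin N) : ℝ × ℝ :=
  (10 * M * ((n : ℕ) : ℝ), -(z n))

noncomputable def Kset {N : ℕ} (M : ℝ) (z : Fin N → ℝ) : Set (ℝ × ℝ) :=
  ⋃ n : Fin N, ({pp M z n, pm M z n} ∪ box M n)

theorem pp_mem {N : ℕ} (M : ℝ) (z : Fin N → ℝ) (n : Fin N) : pp M z n ∈ Kset M z :=
  Set.mem_iUnion.mpr ⟨n, Or.inl (Set.mem_insert _ _)⟩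

theorem pm_mem {N : ℕ} (M : ℝ) (z : Fin N → ℝ) (n : Fin N) : pm M z n ∈ Kset M z :=
  Set.mem_iUnion.mpr ⟨n, Or.inl (Set.mem_insert_of_mem _ rfl)⟩

theorem Kset_compact {N : ℕ} (M : ℝ) (z : Fin N → ℝ) : IsCompact (Kset M z) := by
  apply isCompact_iUnion
  intro n
  exact ((Set.toFinite _).isCompact).union (isCompact_Icc.prod isCompact_Icc)

instance {N : ℕ} (M : ℝ) (z : Fin N → ℝ) : CompactSpace ↥(Kset M z) :=
  isCompact_iff_compactSpace.mp (Kset_compact M z)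

theorem Kset_nonempty {N : ℕ} (hN : 0 < N) (M : ℝ) (z : Fin N → ℝ) : (Kset M z).Nonempty :=
  ⟨pp M z ⟨0, hN⟩, pp_mem M z ⟨0, hN⟩⟩

namespace GHAux

/-- A point is one of the two "pair" points of cluster `m`. -/
def IsPair {N : ℕ} (M : ℝ) (z : Fin N → ℝ) (m : Fin N) (w : ℝ × ℝ) : Prop :=
  w = pp M z m ∨ w = pm M z m

variable {N : ℕ} {M : ℝ} {z : Fin N → ℝ}

lemma mem_Kset_iff {w : ℝ × ℝ} :
    w ∈ Kset M z ↔ ∃ m : Fin N, IsPair M z m w ∨ w ∈ box M m := by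
  simp only [Kset, Set.mem_iUnion, Set.mem_union, Set.mem_insert_iff,
    Set.mem_singleton_iff, IsPair]

lemma IsPair.fst {m : Fin N} {w : ℝ × ℝ} (h : IsPair M z m w) :
    w.1 = 10 * M * ((m : ℕ) : ℝ) := by
  rcases h with h | h <;> subst h <;> rfl

lemma IsPair.snd_abs {m : Fin N} {w : ℝ × ℝ} (hz : ∀ n, z n ∈ Set.Icc (0:ℝ) M)
    (h : IsPair M z m w) : |w.2| ≤ M := by
  have h1 := (hz m).1
  have h2 := (hz m).2
  rcases h with h | h <;> subst h
  · simpa [pp, abs_le] using ⟨by linarith, h2⟩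
  · simpa [pm, abs_le] using ⟨by linarith, by linarith⟩

lemma box_mem_iff {k : ℕ} {w : ℝ × ℝ} :
    w ∈ box M k ↔ (4*M + 10*M*(k:ℝ) ≤ w.1 ∧ w.1 ≤ 4*M + 10*M*(k:ℝ) + 2*M)
      ∧ (-M ≤ w.2 ∧ w.2 ≤ M) := by
  simp only [box, Set.mem_prod, Set.mem_Icc]

lemma dist_eq_max (w v : ℝ × ℝ) : dist w v = max |w.1 - v.1| |w.2 - v.2| := by
  rw [Prod.dist_eq, Real.dist_eq, Real.dist_eq]

lemma abs_fst_le_dist (w v : ℝ × ℝ) : |w.1 - v.1| ≤ dist w v := by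
  rw [dist_eq_max]; exact le_max_left _ _

lemma dist_le_of_bounds {w v : ℝ × ℝ} {c : ℝ} (h1 : |w.1 - v.1| ≤ c)
    (h2 : |w.2 - v.2| ≤ c) : dist w v ≤ c := by
  rw [dist_eq_max]; exact max_le h1 h2

private lemma nat_gap {a b : ℕ} (h : a ≠ b) : (1:ℝ) ≤ |(a:ℝ) - (b:ℝ)| := by
  rcases h.lt_or_gt with h | h
  · have : (a:ℝ) + 1 ≤ b := by exact_mod_cast h
    rw [abs_sub_comm, abs_of_nonneg (by linarith)]; linarith
  · have : (b:ℝ) + 1 ≤ a := by exact_mod_cast h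
    rw [abs_of_nonneg (by linarith)]; linarith

private lemma gap10 (hM : 0 < M) {a b : ℕ} (h : a ≠ b) :
    10*M ≤ |10*M*(a:ℝ) - 10*M*(b:ℝ)| := by
  have h1 := nat_gap h
  have he : |10*M*(a:ℝ) - 10*M*(b:ℝ)| = 10*M*|(a:ℝ)-(b:ℝ)| := by
    rw [← mul_sub, abs_mul, abs_of_pos (by linarith)]
  rw [he]; nlinarith

private lemma gap_pair_box (hM : 0 < M) {a b : ℕ} {t : ℝ}
    (h1 : 4*M + 10*M*(b:ℝ) ≤ t) (h2 : t ≤ 4*M + 10*M*(b:ℝ) + 2*M) :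
    4*M ≤ |10*M*(a:ℝ) - t| := by
  rcases le_or_gt a b with h | h
  · have ha : (a:ℝ) ≤ b := by exact_mod_cast h
    rw [abs_sub_comm, abs_of_nonneg (by nlinarith)]; nlinarith
  · have ha : (b:ℝ) + 1 ≤ a := by exact_mod_cast h
    rw [abs_of_nonneg (by nlinarith)]; nlinarith

private lemma gap_pair_box_far (hM : 0 < M) {a b : ℕ} {t : ℝ}
    (h1 : 4*M + 10*M*(b:ℝ) ≤ t) (h2 : t ≤ 4*M + 10*M*(b:ℝ) + 2*M)
    (hne : ¬(b = a ∨ b + 1 = a)) :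
    8*M ≤ |10*M*(a:ℝ) - t| := by
  push_neg at hne
  rcases le_or_gt a b with h | h
  · have hab : a ≠ b := fun e => hne.1 e.symm
    have ha : (a:ℝ) + 1 ≤ b := by exact_mod_cast lt_of_le_of_ne h hab
    rw [abs_sub_comm, abs_of_nonneg (by nlinarith)]; nlinarith
  · have hb1 : b + 1 ≤ a := h
    have hb2 : b + 1 ≠ a := hne.2
    have ha : (b:ℝ) + 2 ≤ a := by exact_mod_cast lt_of_le_of_ne hb1 hb2
    rw [abs_of_nonneg (by nlinarith)]; nlinarith

private lemma gap_box_box (hM : 0 < M) {a b : ℕ} {s t : ℝ} (h : a ≠ b)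
    (hs1 : 4*M + 10*M*(a:ℝ) ≤ s) (hs2 : s ≤ 4*M + 10*M*(a:ℝ) + 2*M)
    (ht1 : 4*M + 10*M*(b:ℝ) ≤ t) (ht2 : t ≤ 4*M + 10*M*(b:ℝ) + 2*M) :
    8*M ≤ |s - t| := by
  rcases h.lt_or_gt with h | h
  · have ha : (a:ℝ) + 1 ≤ b := by exact_mod_cast h
    rw [abs_sub_comm, abs_of_nonneg (by nlinarith)]; nlinarith
  · have ha : (b:ℝ) + 1 ≤ a := by exact_mod_cast h
    rw [abs_of_nonneg (by nlinarith)]; nlinarith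

lemma pair_pair_dist (hM : 0 < M) {m m' : Fin N} {w v : ℝ × ℝ}
    (hw : IsPair M z m w) (hv : IsPair M z m' v) (h : m ≠ m') :
    10*M ≤ dist w v := by
  refine le_trans ?_ (abs_fst_le_dist w v)
  rw [hw.fst, hv.fst]
  exact gap10 hM (fun e => h (Fin.ext e))

lemma pair_box_dist (hM : 0 < M) {m : Fin N} {k : ℕ} {w v : ℝ × ℝ}
    (hw : IsPair M z m w) (hv : v ∈ box M k) :
    4*M ≤ dist w v := by
  refine le_trans ?_ (abs_fst_le_dist w v)
  rw [hw.fst]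
  rcases box_mem_iff.1 hv with ⟨⟨h1, h2⟩, -⟩
  exact gap_pair_box hM h1 h2

lemma pair_box_dist_far (hM : 0 < M) {m : Fin N} {k : ℕ} {w v : ℝ × ℝ}
    (hw : IsPair M z m w) (hv : v ∈ box M k) (hne : ¬(k = (m:ℕ) ∨ k + 1 = (m:ℕ))) :
    8*M ≤ dist w v := by
  refine le_trans ?_ (abs_fst_le_dist w v)
  rw [hw.fst]
  rcases box_mem_iff.1 hv with ⟨⟨h1, h2⟩, -⟩
  exact gap_pair_box_far hM h1 h2 hne

lemma box_box_dist (hM : 0 < M) {k k' : ℕ} {w v : ℝ × ℝ}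
    (hw : w ∈ box M k) (hv : v ∈ box M k') (h : k ≠ k') :
    8*M ≤ dist w v := by
  refine le_trans ?_ (abs_fst_le_dist w v)
  rcases box_mem_iff.1 hw with ⟨⟨h1, h2⟩, -⟩
  rcases box_mem_iff.1 hv with ⟨⟨h3, h4⟩, -⟩
  exact gap_box_box hM h h1 h2 h3 h4

lemma pair_diam (hz : ∀ n, z n ∈ Set.Icc (0:ℝ) M) {m : Fin N} {w v : ℝ × ℝ}
    (hw : IsPair M z m w) (hv : IsPair M z m v) : dist w v ≤ 2*M := by
  have hM : (0:ℝ) ≤ M := le_trans (hz m).1 (hz m).2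
  apply dist_le_of_bounds
  · rw [hw.fst, hv.fst]; simp; linarith
  · have h1 := hw.snd_abs hz
    have h2 := hv.snd_abs hz
    rw [abs_le] at h1 h2 ⊢
    constructor <;> linarith [h1.1, h1.2, h2.1, h2.2]

lemma box_diam {k : ℕ} {w v : ℝ × ℝ} (hw : w ∈ box M k) (hv : v ∈ box M k) :
    dist w v ≤ 2*M := by
  rcases box_mem_iff.1 hw with ⟨⟨h1, h2⟩, h5, h6⟩
  rcases box_mem_iff.1 hv with ⟨⟨h3, h4⟩, h7, h8⟩
  apply dist_le_of_bounds <;> rw [abs_le] <;> constructor <;> linarith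

lemma pair_unique (hM : 0 < M) {m m' : Fin N} {w : ℝ × ℝ}
    (hw : IsPair M z m w) (hw' : IsPair M z m' w) : m = m' := by
  by_contra h
  have := pair_pair_dist hM hw hw' h
  simp at this
  linarith

lemma pair_not_box (hM : 0 < M) {m : Fin N} {k : ℕ} {w : ℝ × ℝ}
    (hw : IsPair M z m w) (hb : w ∈ box M k) : False := by
  have := pair_box_dist hM hw hb
  simp at this
  linarith

lemma box_unique (hM : 0 < M) {k k' : ℕ} {w : ℝ × ℝ}
    (hw : w ∈ box M k) (hw' : w ∈ box M k') : k = k' := by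
  by_contra h
  have := box_box_dist hM hw hw' h
  simp at this
  linarith

lemma close_pair (hM : 0 < M) {m : Fin N} {w v : ℝ × ℝ}
    (hw : IsPair M z m w) (hv : v ∈ Kset M z) (hd : dist w v < 4*M) :
    IsPair M z m v := by
  rcases mem_Kset_iff.1 hv with ⟨m', hm' | hb⟩
  · rcases eq_or_ne m m' with rfl | hne
    · exact hm'
    · have := pair_pair_dist hM hw hm' hne
      linarith
  · have := pair_box_dist hM hw hb
    linarith

lemma close_box (hM : 0 < M) {k : ℕ} {w v : ℝ × ℝ}
    (hw : w ∈ box M k) (hv : v ∈ Kset M z) (hd : dist w v < 4*M) :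
    v ∈ box M k := by
  rcases mem_Kset_iff.1 hv with ⟨m', hm' | hb⟩
  · have := pair_box_dist hM hm' hw
    rw [dist_comm] at this
    linarith
  · rcases eq_or_ne k ((m' : ℕ)) with rfl | hne
    · exact hb
    · have := box_box_dist hM hw hb hne
      linarith

lemma box_subset_Kset {k : Fin N} : box M (k : ℕ) ⊆ Kset M z := fun w hw =>
  mem_Kset_iff.2 ⟨k, Or.inr hw⟩

end GHAux
namespace GHAux

/-- All the hypotheses of the approximate-matching situation. -/
structure Hyp {N : ℕ} (M r : ℝ) (x y : Fin N → ℝ) (f g : ℝ × ℝ → ℝ × ℝ) : Prop where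
  hM : 0 < M
  hr : 0 ≤ r
  hrM : r < M
  hx : ∀ n, x n ∈ Set.Icc (0:ℝ) M
  hy : ∀ n, y n ∈ Set.Icc (0:ℝ) M
  hf : ∀ p ∈ Kset M x, f p ∈ Kset M y
  hg : ∀ q ∈ Kset M y, g q ∈ Kset M x
  hdf : ∀ p ∈ Kset M x, ∀ q ∈ Kset M x, |dist (f p) (f q) - dist p q| ≤ 2*r
  hdg : ∀ p ∈ Kset M y, ∀ q ∈ Kset M y, |dist (g p) (g q) - dist p q| ≤ 2*r
  hgf : ∀ p ∈ Kset M x, dist (g (f p)) p ≤ 2*r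
  hfg : ∀ q ∈ Kset M y, dist (f (g q)) q ≤ 2*r

variable {N : ℕ} {M r : ℝ} {x y : Fin N → ℝ} {f g : ℝ × ℝ → ℝ × ℝ}


lemma corner_mem {k : ℕ} {a b : ℝ} (h1 : 4*M + 10*M*(k:ℝ) ≤ a)
    (h2 : a ≤ 4*M + 10*M*(k:ℝ) + 2*M) (h3 : -M ≤ b) (h4 : b ≤ M) :
    ((a, b) : ℝ × ℝ) ∈ box M k :=
  box_mem_iff.2 ⟨⟨h1, h2⟩, h3, h4⟩

lemma dist_mk (a b c d : ℝ) :
    dist ((a, b) : ℝ × ℝ) ((c, d) : ℝ × ℝ) = max |a - c| |b - d| := by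
  rw [dist_eq_max]

lemma Hyp.symm (H : Hyp M r x y f g) : Hyp M r y x g f :=
  ⟨H.hM, H.hr, H.hrM, H.hy, H.hx, H.hg, H.hf, H.hdg, H.hdf, H.hfg, H.hgf⟩

lemma Hyp.dist_f_le (H : Hyp M r x y f g) {p q : ℝ × ℝ}
    (hp : p ∈ Kset M x) (hq : q ∈ Kset M x) :
    dist (f p) (f q) ≤ dist p q + 2*r := by
  have h := H.hdf p hp q hq
  rw [abs_le] at h
  linarith [h.2]

lemma Hyp.dist_f_ge (H : Hyp M r x y f g) {p q : ℝ × ℝ}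
    (hp : p ∈ Kset M x) (hq : q ∈ Kset M x) :
    dist p q - 2*r ≤ dist (f p) (f q) := by
  have h := H.hdf p hp q hq
  rw [abs_le] at h
  linarith [h.1]

/-- The image of any box point is a box point. -/
lemma Hyp.box_to_box (H : Hyp M r x y f g) {k : Fin N} {w : ℝ × ℝ}
    (hw : w ∈ box M (k:ℕ)) : ∃ l : Fin N, f w ∈ box M (l:ℕ) := by
  have hM := H.hM
  have hwK : w ∈ Kset M x := box_subset_Kset hw
  rcases mem_Kset_iff.1 (H.hf w hwK) with ⟨l, hl | hb⟩
  · exfalso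
    have hc1 : ((4*M + 10*M*((k:ℕ):ℝ), -M) : ℝ × ℝ) ∈ box M (k:ℕ) :=
      corner_mem (le_refl _) (by linarith) (le_refl _) (by linarith)
    have hc2 : ((4*M + 10*M*((k:ℕ):ℝ), M) : ℝ × ℝ) ∈ box M (k:ℕ) :=
      corner_mem (le_refl _) (by linarith) (by linarith) (le_refl _)
    have hc3 : ((4*M + 10*M*((k:ℕ):ℝ) + 2*M, -M) : ℝ × ℝ) ∈ box M (k:ℕ) :=
      corner_mem (by linarith) (le_refl _) (le_refl _) (by linarith)
    have habs : |(-M : ℝ) - M| = 2*M := by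
      rw [show (-M : ℝ) - M = -(2*M) by ring, abs_neg, abs_of_nonneg (by linarith)]
    have habs2 : ∀ a : ℝ, |a - (a + 2*M)| = 2*M := by
      intro a
      rw [show a - (a + 2*M) = -(2*M) by ring, abs_neg, abs_of_nonneg (by linarith)]
    have d12 : dist ((4*M + 10*M*((k:ℕ):ℝ), -M) : ℝ × ℝ) ((4*M + 10*M*((k:ℕ):ℝ), M) : ℝ × ℝ)
        = 2*M := by
      rw [dist_mk, sub_self, abs_zero, habs]
      exact max_eq_right (by linarith)
    have d13 : dist ((4*M + 10*M*((k:ℕ):ℝ), -M) : ℝ × ℝ)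
        ((4*M + 10*M*((k:ℕ):ℝ) + 2*M, -M) : ℝ × ℝ) = 2*M := by
      rw [dist_mk, sub_self, abs_zero, habs2]
      exact max_eq_left (by linarith)
    have d23 : dist ((4*M + 10*M*((k:ℕ):ℝ), M) : ℝ × ℝ)
        ((4*M + 10*M*((k:ℕ):ℝ) + 2*M, -M) : ℝ × ℝ) = 2*M := by
      rw [dist_mk, habs2, show (M : ℝ) - -M = 2*M by ring, abs_of_nonneg (by linarith)]
      simp
    have himg : ∀ c : ℝ × ℝ, c ∈ box M (k:ℕ) → IsPair M y l (f c) := by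
      intro c hc
      apply close_pair hM hl (H.hf c (box_subset_Kset hc))
      have h1 : dist w c ≤ 2*M := box_diam hw hc
      have h2 := H.dist_f_le hwK (box_subset_Kset hc)
      have := H.hrM
      linarith
    have contra : ∀ u v : ℝ × ℝ, u ∈ box M (k:ℕ) → v ∈ box M (k:ℕ) →
        dist u v = 2*M → f u = f v → False := by
      intro u v hu hv hduv hfeq
      have h := H.hdf u (box_subset_Kset hu) v (box_subset_Kset hv)
      rw [hfeq, dist_self, hduv, zero_sub, abs_neg, abs_of_nonneg (by linarith)] at h
      have := H.hrM
      linarith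
    have h1 := himg _ hc1
    have h2 := himg _ hc2
    have h3 := himg _ hc3
    rcases h1 with e1 | e1 <;> rcases h2 with e2 | e2 <;> rcases h3 with e3 | e3 <;>
      first
        | exact contra _ _ hc1 hc2 d12 (e1.trans e2.symm)
        | exact contra _ _ hc1 hc3 d13 (e1.trans e3.symm)
        | exact contra _ _ hc2 hc3 d23 (e2.trans e3.symm)
  · exact ⟨_, hb⟩

/-- All of box `k` is mapped into a single box. -/
lemma Hyp.box_coherent (H : Hyp M r x y f g) (k : Fin N) :
    ∃ l : Fin N, ∀ w ∈ box M (k:ℕ), f w ∈ box M (l:ℕ) := by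
  have hM := H.hM
  have hc1 : ((4*M + 10*M*((k:ℕ):ℝ), -M) : ℝ × ℝ) ∈ box M (k:ℕ) :=
    corner_mem (le_refl _) (by linarith) (le_refl _) (by linarith)
  obtain ⟨l, hl⟩ := H.box_to_box hc1
  refine ⟨l, fun w hw => ?_⟩
  apply close_box hM hl (H.hf w (box_subset_Kset hw))
  have h1 : dist ((4*M + 10*M*((k:ℕ):ℝ), -M) : ℝ × ℝ) w ≤ 2*M := box_diam hc1 hw
  have h2 := H.dist_f_le (box_subset_Kset hc1) (box_subset_Kset hw)
  have := H.hrM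
  linarith

/-- Pair points are mapped to pair points, coherently. -/
lemma Hyp.pair_to_pair (H : Hyp M r x y f g) (m : Fin N) :
    ∃ l : Fin N, IsPair M y l (f (pp M x m)) ∧ IsPair M y l (f (pm M x m)) := by
  have hM := H.hM
  have hrM := H.hrM
  have hr := H.hr
  have hppK := pp_mem M x m
  have hpmK := pm_mem M x m
  have hppP : IsPair M x m (pp M x m) := Or.inl rfl
  have hpmP : IsPair M x m (pm M x m) := Or.inr rfl
  rcases mem_Kset_iff.1 (H.hf _ hppK) with ⟨l, hl | hb⟩
  · refine ⟨l, hl, ?_⟩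
    apply close_pair hM hl (H.hf _ hpmK)
    have h1 : dist (pp M x m) (pm M x m) ≤ 2*M := pair_diam H.hx hppP hpmP
    have h2 := H.dist_f_le hppK hpmK
    linarith
  · exfalso
    obtain ⟨l', hl'⟩ := (H.symm).box_to_box hb
    have h2 : IsPair M x m (g (f (pp M x m))) := by
      apply close_pair hM hppP (H.hg _ (H.hf _ hppK))
      rw [dist_comm]
      have := H.hgf _ hppK
      linarith
    exact pair_not_box hM h2 hl'

/-- Adjacency: if a pair point at distance `≤ 4M` from a box point has image in
pair `l`, and the box point's image is in box `t`, then `t = l` or `t + 1 = l`. -/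
lemma Hyp.adjacent (H : Hyp M r x y f g) {m l : Fin N} {k t : ℕ} {q : ℝ × ℝ}
    (hl : IsPair M y l (f (pp M x m)))
    (hq : q ∈ box M k) (hqK : q ∈ Kset M x) (hdq : dist (pp M x m) q ≤ 4*M)
    (ht : f q ∈ box M t) :
    t = (l:ℕ) ∨ t + 1 = (l:ℕ) := by
  by_contra hc
  have h8 : 8*M ≤ dist (f (pp M x m)) (f q) := pair_box_dist_far H.hM hl ht hc
  have h2 := H.dist_f_le (pp_mem M x m) hqK
  have := H.hrM
  have := H.hM
  linarith

lemma Hyp.box_inj (H : Hyp M r x y f g) {k k' : Fin N} {t : ℕ} {w w' : ℝ × ℝ}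
    (hw : w ∈ box M (k:ℕ)) (hw' : w' ∈ box M (k':ℕ)) (hne : (k:ℕ) ≠ (k':ℕ))
    (hfw : f w ∈ box M t) (hfw' : f w' ∈ box M t) : False := by
  have h1 : dist (f w) (f w') ≤ 2*M := box_diam hfw hfw'
  have h2 := H.dist_f_ge (box_subset_Kset hw) (box_subset_Kset hw')
  have h3 : 8*M ≤ dist w w' := box_box_dist H.hM hw hw' hne
  have := H.hrM
  have := H.hM
  linarith

lemma Hyp.pair_inj (H : Hyp M r x y f g) {m m' l : Fin N} {w w' : ℝ × ℝ}
    (hw : IsPair M x m w) (hw' : IsPair M x m' w') (hne : m ≠ m')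
    (hwK : w ∈ Kset M x) (hw'K : w' ∈ Kset M x)
    (hfw : IsPair M y l (f w)) (hfw' : IsPair M y l (f w')) : False := by
  have h1 : dist (f w) (f w') ≤ 2*M := pair_diam H.hy hfw hfw'
  have h2 := H.dist_f_ge hwK hw'K
  have h3 : 10*M ≤ dist w w' := pair_pair_dist H.hM hw hw' hne
  have := H.hrM
  have := H.hM
  linarith

end GHAux
namespace GHAux

variable {N : ℕ} {M r : ℝ} {x y : Fin N → ℝ} {f g : ℝ × ℝ → ℝ × ℝ} {z : Fin N → ℝ}

lemma dist_pp_corner (hM : 0 ≤ M) (z : Fin N → ℝ) (n : Fin N) {a : ℝ}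
    (h : |10*M*((n:ℕ):ℝ) - a| ≤ 4*M) :
    dist (pp M z n) ((a, z n) : ℝ × ℝ) ≤ 4*M := by
  have he : dist (pp M z n) ((a, z n) : ℝ × ℝ)
      = max |10*M*((n:ℕ):ℝ) - a| |z n - z n| := dist_mk _ _ _ _
  rw [he, sub_self, abs_zero]
  exact max_le h (by linarith)

lemma Hyp.sigma_zero (H : Hyp M r x y f g) (hN : 0 < N) {j : Fin N}
    (hj : IsPair M y j (f (pp M x ⟨0, hN⟩))) : (j : ℕ) = 0 := by
  have hM := H.hM
  have hrM := H.hrM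
  have hr := H.hr
  by_contra hj0
  have hj1 : 0 < (j:ℕ) := Nat.pos_of_ne_zero hj0
  have hj1N : (j:ℕ) - 1 < N := lt_trans (Nat.pred_lt hj0) j.isLt
  have hppK := pp_mem M x ⟨0, hN⟩
  have h0 : IsPair M x ⟨0, hN⟩ (g (f (pp M x ⟨0, hN⟩))) := by
    apply close_pair hM (Or.inl rfl) (H.hg _ (H.hf _ hppK))
    rw [dist_comm]
    have := H.hgf _ hppK
    linarith
  have hgppj : IsPair M x ⟨0, hN⟩ (g (pp M y j)) := by
    apply close_pair hM h0 (H.hg _ (pp_mem M y j))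
    have h1 : dist (f (pp M x ⟨0, hN⟩)) (pp M y j) ≤ 2*M :=
      pair_diam H.hy hj (Or.inl rfl)
    have h2 := (H.symm).dist_f_le (H.hf _ hppK) (pp_mem M y j)
    linarith
  obtain ⟨t, ht⟩ := (H.symm).box_coherent j
  obtain ⟨t', ht'⟩ := (H.symm).box_coherent ⟨(j:ℕ) - 1, hj1N⟩
  have hq : ((4*M + 10*M*((j:ℕ):ℝ), y j) : ℝ × ℝ) ∈ box M (j:ℕ) :=
    corner_mem (le_refl _) (by linarith) (by linarith [(H.hy j).1]) (H.hy j).2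
  have hdq : dist (pp M y j) ((4*M + 10*M*((j:ℕ):ℝ), y j) : ℝ × ℝ) ≤ 4*M :=
    dist_pp_corner (by linarith) _ _ (by rw [abs_le]; constructor <;> linarith)
  have hcast : (((j:ℕ) - 1 : ℕ) : ℝ) = ((j:ℕ):ℝ) - 1 := Nat.cast_pred hj1
  have hq' : ((4*M + 10*M*((((j:ℕ) - 1 : ℕ)):ℝ) + 2*M, y j) : ℝ × ℝ)
      ∈ box M ((j:ℕ) - 1) :=
    corner_mem (by linarith) (le_refl _) (by linarith [(H.hy j).1]) (H.hy j).2
  have hdq' : dist (pp M y j)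
      ((4*M + 10*M*((((j:ℕ) - 1 : ℕ)):ℝ) + 2*M, y j) : ℝ × ℝ) ≤ 4*M := by
    apply dist_pp_corner (by linarith)
    rw [hcast, abs_le]
    constructor <;> linarith
  have hgq : g ((4*M + 10*M*((j:ℕ):ℝ), y j) : ℝ × ℝ) ∈ box M (t:ℕ) := ht _ hq
  have hgq' : g ((4*M + 10*M*((((j:ℕ) - 1 : ℕ)):ℝ) + 2*M, y j) : ℝ × ℝ)
      ∈ box M (t':ℕ) := ht' _ hq'
  have ht0 : (t:ℕ) = 0 := by
    have h2 := (H.symm).adjacent (l := ⟨0, hN⟩) hgppj hq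
      (box_subset_Kset (k := j) hq) hdq hgq
    have h3 : (t:ℕ) = 0 ∨ (t:ℕ) + 1 = 0 := by simpa using h2
    omega
  have ht'0 : (t':ℕ) = 0 := by
    have h2 := (H.symm).adjacent (l := ⟨0, hN⟩) hgppj hq'
      (box_subset_Kset (k := ⟨(j:ℕ) - 1, hj1N⟩) hq') hdq' hgq'
    have h3 : (t':ℕ) = 0 ∨ (t':ℕ) + 1 = 0 := by simpa using h2
    omega
  rw [ht0] at hgq
  rw [ht'0] at hgq'
  exact (H.symm).box_inj (k := ⟨(j:ℕ) - 1, hj1N⟩) (k' := j) hq' hq (by simp; omega) hgq' hgq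

/-- The main induction: `f` maps cluster `m` of `K_x` onto cluster `m` of `K_y`. -/
lemma Hyp.sigma_id (H : Hyp M r x y f g) :
    ∀ m : ℕ, ∀ h : m < N,
      (IsPair M y ⟨m, h⟩ (f (pp M x ⟨m, h⟩)) ∧ IsPair M y ⟨m, h⟩ (f (pm M x ⟨m, h⟩)))
        ∧ ∀ w ∈ box M m, f w ∈ box M m := by
  have hM := H.hM
  intro m
  induction m with
  | zero =>
    intro h
    obtain ⟨l, hl1, hl2⟩ := H.pair_to_pair ⟨0, h⟩
    have hl0 : l = ⟨0, h⟩ := Fin.ext (H.sigma_zero h hl1)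
    subst hl0
    refine ⟨⟨hl1, hl2⟩, ?_⟩
    obtain ⟨t, ht⟩ := H.box_coherent ⟨0, h⟩
    have hx0 := H.hx ⟨0, h⟩
    have hq : ((4*M + 10*M*(((0:ℕ)):ℝ), x ⟨0, h⟩) : ℝ × ℝ) ∈ box M (0:ℕ) :=
      corner_mem (le_refl _) (by linarith) (by linarith [hx0.1]) hx0.2
    have hdq : dist (pp M x ⟨0, h⟩) ((4*M + 10*M*(((0:ℕ)):ℝ), x ⟨0, h⟩) : ℝ × ℝ) ≤ 4*M :=
      dist_pp_corner (by linarith) _ _ (by rw [abs_le]; push_cast; constructor <;> linarith)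
    have hfq : f _ ∈ box M (t:ℕ) := ht _ hq
    have ht0 : (t:ℕ) = 0 := by
      have h2 := H.adjacent (l := ⟨0, h⟩) hl1 hq (box_subset_Kset (k := ⟨0, h⟩) hq) hdq hfq
      have h3 : (t:ℕ) = 0 ∨ (t:ℕ) + 1 = 0 := by simpa using h2
      omega
    intro w hw
    have := ht w hw
    rwa [ht0] at this
  | succ m ih =>
    intro h
    have h' : m < N := lt_trans (Nat.lt_succ_self m) h
    obtain ⟨⟨ihp1, _⟩, ihb⟩ := ih h'
    have hxm := H.hx ⟨m + 1, h⟩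
    obtain ⟨j, hj1, hj2⟩ := H.pair_to_pair ⟨m + 1, h⟩
    -- adjacency of pair (m+1) with box m forces j ∈ {m, m+1}
    have hq' : ((4*M + 10*M*((m:ℕ):ℝ) + 2*M, x ⟨m + 1, h⟩) : ℝ × ℝ) ∈ box M m :=
      corner_mem (by linarith) (le_refl _) (by linarith [hxm.1]) hxm.2
    have hdq' : dist (pp M x ⟨m + 1, h⟩)
        ((4*M + 10*M*((m:ℕ):ℝ) + 2*M, x ⟨m + 1, h⟩) : ℝ × ℝ) ≤ 4*M := by
      apply dist_pp_corner (by linarith)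
      rw [abs_le]
      push_cast
      constructor <;> linarith
    have hadj := H.adjacent (l := j) hj1 hq' (box_subset_Kset (k := ⟨m, h'⟩) hq')
      hdq' (ihb _ hq')
    have hjv : (j:ℕ) = m + 1 := by
      rcases hadj with he | he
      · exfalso
        have hjm : j = ⟨m, h'⟩ := Fin.ext (by simpa using he.symm)
        subst hjm
        exact H.pair_inj (m := ⟨m + 1, h⟩) (m' := ⟨m, h'⟩) (Or.inl rfl) (Or.inl rfl)
          (by simp [Fin.ext_iff]) (pp_mem M x _) (pp_mem M x _) hj1 ihp1
      · omega
    have hjeq : j = ⟨m + 1, h⟩ := Fin.ext (by simpa using hjv)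
    subst hjeq
    refine ⟨⟨hj1, hj2⟩, ?_⟩
    -- now the box m+1
    obtain ⟨t, ht⟩ := H.box_coherent ⟨m + 1, h⟩
    have hq : ((4*M + 10*M*(((m + 1 : ℕ)):ℝ), x ⟨m + 1, h⟩) : ℝ × ℝ) ∈ box M (m + 1 : ℕ) :=
      corner_mem (le_refl _) (by linarith) (by linarith [hxm.1]) hxm.2
    have hdq : dist (pp M x ⟨m + 1, h⟩)
        ((4*M + 10*M*(((m + 1 : ℕ)):ℝ), x ⟨m + 1, h⟩) : ℝ × ℝ) ≤ 4*M :=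
      dist_pp_corner (by linarith) _ _ (by rw [abs_le]; push_cast; constructor <;> linarith)
    have hfq : f _ ∈ box M (t:ℕ) := ht _ hq
    have hadj2 := H.adjacent (l := ⟨m + 1, h⟩) hj1 hq
      (box_subset_Kset (k := ⟨m + 1, h⟩) hq) hdq hfq
    have ht1 : (t:ℕ) = m + 1 := by
      have h3 : (t:ℕ) = m + 1 ∨ (t:ℕ) + 1 = m + 1 := by simpa using hadj2
      rcases h3 with he | he
      · exact he
      · exfalso
        have htm : (t:ℕ) = m := by omega
        rw [htm] at hfq
        have hfq' := ihb _ hq'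
        exact H.box_inj (k := ⟨m + 1, h⟩) (k' := ⟨m, h'⟩) hq hq' (by simp) hfq hfq'
    intro w hw
    have := ht w hw
    rwa [ht1] at this

lemma dist_pp_pm (hz : ∀ n, z n ∈ Set.Icc (0:ℝ) M) (n : Fin N) :
    dist (pp M z n) (pm M z n) = 2 * z n := by
  have h0 := (hz n).1
  have he : dist (pp M z n) (pm M z n)
      = max |10*M*((n:ℕ):ℝ) - 10*M*((n:ℕ):ℝ)| |z n - -(z n)| := dist_mk _ _ _ _
  rw [he, sub_self, abs_zero, show z n - -(z n) = 2 * z n by ring,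
    abs_of_nonneg (by linarith)]
  exact max_eq_right (by linarith)

lemma pair_dist_of_ne (hz : ∀ n, z n ∈ Set.Icc (0:ℝ) M) {n : Fin N} {u v : ℝ × ℝ}
    (hu : IsPair M z n u) (hv : IsPair M z n v) (hne : u ≠ v) :
    dist u v = 2 * z n := by
  rcases hu with hu | hu <;> rcases hv with hv | hv <;> subst hu <;> subst hv
  · exact absurd rfl hne
  · exact dist_pp_pm hz n
  · rw [dist_comm]; exact dist_pp_pm hz n
  · exact absurd rfl hne

/-- The key estimate. -/
lemma Hyp.key (H : Hyp M r x y f g) (n : Fin N) : |x n - y n| ≤ r := by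
  have hM := H.hM
  have hxn := H.hx n
  have hyn := H.hy n
  have h1 := (H.sigma_id (n:ℕ) n.isLt).1
  have h2 := ((H.symm).sigma_id (n:ℕ) n.isLt).1
  rw [Fin.eta] at h1 h2
  obtain ⟨hf1, hf2⟩ := h1
  obtain ⟨hg1, hg2⟩ := h2
  rcases eq_or_ne (f (pp M x n)) (f (pm M x n)) with hfe | hfne
  · have hxr : 2 * x n ≤ 2*r := by
      have hd := H.hdf _ (pp_mem M x n) _ (pm_mem M x n)
      rw [hfe, dist_self, dist_pp_pm H.hx, zero_sub, abs_neg,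
        abs_of_nonneg (by linarith [hxn.1])] at hd
      exact hd
    rcases eq_or_ne (g (pp M y n)) (g (pm M y n)) with hge | hgne
    · have hyr : 2 * y n ≤ 2*r := by
        have hd := H.hdg _ (pp_mem M y n) _ (pm_mem M y n)
        rw [hge, dist_self, dist_pp_pm H.hy, zero_sub, abs_neg,
          abs_of_nonneg (by linarith [hyn.1])] at hd
        exact hd
      rw [abs_le]
      constructor <;> linarith [hxn.1, hyn.1]
    · have hd : dist (g (pp M y n)) (g (pm M y n)) = 2 * x n :=
        pair_dist_of_ne H.hx hg1 hg2 hgne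
      have hdd := H.hdg _ (pp_mem M y n) _ (pm_mem M y n)
      rw [hd, dist_pp_pm H.hy] at hdd
      rw [abs_le] at hdd ⊢
      constructor <;> linarith [hdd.1, hdd.2]
  · have hd : dist (f (pp M x n)) (f (pm M x n)) = 2 * y n :=
      pair_dist_of_ne H.hy hf1 hf2 hfne
    have hdd := H.hdf _ (pp_mem M x n) _ (pm_mem M x n)
    rw [hd, dist_pp_pm H.hx] at hdd
    rw [abs_le] at hdd ⊢
    constructor <;> linarith [hdd.1, hdd.2]

end GHAux
open GromovHausdorff Metric in
/-- `d^N(x,y) ≤ d_GH(K_x, K_y)`, where `K_x`, `K_y` are regarded as nonempty compact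
metric subspaces of ℝ² with the Chebyshev distance. -/
theorem dist_le_ghDist_Kset {N : ℕ} (hN : 0 < N) {M : ℝ} (hM : 0 < M)
    (x y : Fin N → ℝ) (hx : ∀ n, x n ∈ Set.Icc (0 : ℝ) M) (hy : ∀ n, y n ∈ Set.Icc (0 : ℝ) M) :
    dist x y ≤
      dist (@GromovHausdorff.toGHSpace ↥(Kset M x) _ _ ((Kset_nonempty hN M x).to_subtype))
        (@GromovHausdorff.toGHSpace ↥(Kset M y) _ _ ((Kset_nonempty hN M y).to_subtype)) := by
  classical
  haveI hNx : Nonempty ↥(Kset M x) := (Kset_nonempty hN M x).to_subtype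
  haveI hNy : Nonempty ↥(Kset M y) := (Kset_nonempty hN M y).to_subtype
  set r := dist (@GromovHausdorff.toGHSpace ↥(Kset M x) _ _ ((Kset_nonempty hN M x).to_subtype))
      (@GromovHausdorff.toGHSpace ↥(Kset M y) _ _ ((Kset_nonempty hN M y).to_subtype)) with hrdef
  have hr0 : (0:ℝ) ≤ r := dist_nonneg
  rcases le_or_gt M r with hMr | hrM
  · rw [dist_pi_le_iff hr0]
    intro n
    rw [Real.dist_eq]
    refine le_trans ?_ hMr
    rw [abs_le]
    constructor <;> linarith [(hx n).1, (hx n).2, (hy n).1, (hy n).2]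
  · -- main case: realize the GH distance by an optimal coupling
    have hgh : GromovHausdorff.ghDist ↥(Kset M x) ↥(Kset M y) = r := rfl
    have hiso_l := isometry_optimalGHInjl ↥(Kset M x) ↥(Kset M y)
    have hiso_r := isometry_optimalGHInjr ↥(Kset M x) ↥(Kset M y)
    set Φ := optimalGHInjl ↥(Kset M x) ↥(Kset M y) with hΦ
    set Ψ := optimalGHInjr ↥(Kset M x) ↥(Kset M y) with hΨ
    have hHD : hausdorffDist (Set.range Φ) (Set.range Ψ) = r := by
      rw [hΦ, hΨ, hausdorffDist_optimal]; exact hgh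
    have hAc : IsCompact (Set.range Φ) := isCompact_range hiso_l.continuous
    have hBc : IsCompact (Set.range Ψ) := isCompact_range hiso_r.continuous
    have hAne : (Set.range Φ).Nonempty := Set.range_nonempty _
    have hBne : (Set.range Ψ).Nonempty := Set.range_nonempty _
    have hfin : EMetric.hausdorffEdist (Set.range Φ) (Set.range Ψ) ≠ ⊤ :=
      hausdorffEdist_ne_top_of_nonempty_of_bounded hAne hBne hAc.isBounded hBc.isBounded
    have hfin' : EMetric.hausdorffEdist (Set.range Ψ) (Set.range Φ) ≠ ⊤ := by
      rwa [EMetric.hausdorffEdist, hausdorffEDist_comm]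
    have hmatchF : ∀ a : ↥(Kset M x), ∃ b : ↥(Kset M y), dist (Φ a) (Ψ b) ≤ r := by
      intro a
      obtain ⟨b', hb', he⟩ := hBc.exists_infDist_eq_dist hBne (Φ a)
      obtain ⟨b, rfl⟩ := hb'
      refine ⟨b, ?_⟩
      rw [← he, ← hHD]
      exact infDist_le_hausdorffDist_of_mem (Set.mem_range_self a) hfin
    have hmatchG : ∀ b : ↥(Kset M y), ∃ a : ↥(Kset M x), dist (Φ a) (Ψ b) ≤ r := by
      intro b
      obtain ⟨a', ha', he⟩ := hAc.exists_infDist_eq_dist hAne (Ψ b)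
      obtain ⟨a, rfl⟩ := ha'
      refine ⟨a, ?_⟩
      rw [dist_comm, ← he, ← hHD, hausdorffDist_comm]
      exact infDist_le_hausdorffDist_of_mem (Set.mem_range_self b) hfin'
    choose F hF using hmatchF
    choose G hG using hmatchG
    set f : ℝ × ℝ → ℝ × ℝ :=
      fun p => if h : p ∈ Kset M x then (F ⟨p, h⟩ : ℝ × ℝ) else pp M y ⟨0, hN⟩ with hfdef
    set g : ℝ × ℝ → ℝ × ℝ :=
      fun q => if h : q ∈ Kset M y then (G ⟨q, h⟩ : ℝ × ℝ) else pp M x ⟨0, hN⟩ with hgdef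
    have hfeq : ∀ (p : ℝ × ℝ) (h : p ∈ Kset M x), f p = (F ⟨p, h⟩ : ℝ × ℝ) := by
      intro p h
      simp only [hfdef, dif_pos h]
    have hgeq : ∀ (q : ℝ × ℝ) (h : q ∈ Kset M y), g q = (G ⟨q, h⟩ : ℝ × ℝ) := by
      intro q h
      simp only [hgdef, dif_pos h]
    have hfK : ∀ p ∈ Kset M x, f p ∈ Kset M y := by
      intro p h
      rw [hfeq p h]
      exact (F ⟨p, h⟩).2
    have hgK : ∀ q ∈ Kset M y, g q ∈ Kset M x := by
      intro q h
      rw [hgeq q h]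
      exact (G ⟨q, h⟩).2
    have hdf : ∀ p ∈ Kset M x, ∀ q ∈ Kset M x, |dist (f p) (f q) - dist p q| ≤ 2*r := by
      intro p hp q hq
      rw [hfeq p hp, hfeq q hq]
      have e1 : dist ((F ⟨p, hp⟩ : ℝ × ℝ)) ((F ⟨q, hq⟩ : ℝ × ℝ))
          = dist (Ψ (F ⟨p, hp⟩)) (Ψ (F ⟨q, hq⟩)) := by
        rw [hiso_r.dist_eq, Subtype.dist_eq]
      have e2 : dist p q = dist (Φ ⟨p, hp⟩) (Φ ⟨q, hq⟩) := by
        rw [hiso_l.dist_eq, Subtype.dist_eq]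
      rw [e1, e2, abs_le]
      have t1 := dist_triangle4 (Φ ⟨p, hp⟩) (Ψ (F ⟨p, hp⟩)) (Ψ (F ⟨q, hq⟩)) (Φ ⟨q, hq⟩)
      have t2 := dist_triangle4 (Ψ (F ⟨p, hp⟩)) (Φ ⟨p, hp⟩) (Φ ⟨q, hq⟩) (Ψ (F ⟨q, hq⟩))
      have c1 := hF ⟨p, hp⟩
      have c2 := hF ⟨q, hq⟩
      have c3 : dist (Ψ (F ⟨p, hp⟩)) (Φ ⟨p, hp⟩) = dist (Φ ⟨p, hp⟩) (Ψ (F ⟨p, hp⟩)) :=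
        dist_comm _ _
      have c4 : dist (Ψ (F ⟨q, hq⟩)) (Φ ⟨q, hq⟩) = dist (Φ ⟨q, hq⟩) (Ψ (F ⟨q, hq⟩)) :=
        dist_comm _ _
      constructor <;> [linarith [t1, c1, c2, c3, c4]; linarith [t2, c1, c2, c3, c4]]
    have hdg : ∀ p ∈ Kset M y, ∀ q ∈ Kset M y, |dist (g p) (g q) - dist p q| ≤ 2*r := by
      intro p hp q hq
      rw [hgeq p hp, hgeq q hq]
      have e1 : dist ((G ⟨p, hp⟩ : ℝ × ℝ)) ((G ⟨q, hq⟩ : ℝ × ℝ))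
          = dist (Φ (G ⟨p, hp⟩)) (Φ (G ⟨q, hq⟩)) := by
        rw [hiso_l.dist_eq, Subtype.dist_eq]
      have e2 : dist p q = dist (Ψ ⟨p, hp⟩) (Ψ ⟨q, hq⟩) := by
        rw [hiso_r.dist_eq, Subtype.dist_eq]
      rw [e1, e2, abs_le]
      have t1 := dist_triangle4 (Ψ ⟨p, hp⟩) (Φ (G ⟨p, hp⟩)) (Φ (G ⟨q, hq⟩)) (Ψ ⟨q, hq⟩)
      have t2 := dist_triangle4 (Φ (G ⟨p, hp⟩)) (Ψ ⟨p, hp⟩) (Ψ ⟨q, hq⟩) (Φ (G ⟨q, hq⟩))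
      have c1 := hG ⟨p, hp⟩
      have c2 := hG ⟨q, hq⟩
      have c3 : dist (Ψ ⟨p, hp⟩) (Φ (G ⟨p, hp⟩)) = dist (Φ (G ⟨p, hp⟩)) (Ψ ⟨p, hp⟩) :=
        dist_comm _ _
      have c4 : dist (Ψ ⟨q, hq⟩) (Φ (G ⟨q, hq⟩)) = dist (Φ (G ⟨q, hq⟩)) (Ψ ⟨q, hq⟩) :=
        dist_comm _ _
      constructor <;> [linarith [t1, c1, c2, c3, c4]; linarith [t2, c1, c2, c3, c4]]
    have hgf : ∀ p ∈ Kset M x, dist (g (f p)) p ≤ 2*r := by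
      intro p hp
      have hm : f p ∈ Kset M y := hfK p hp
      rw [hgeq _ hm]
      have hsub : (⟨f p, hm⟩ : ↥(Kset M y)) = F ⟨p, hp⟩ := by
        apply Subtype.ext
        exact hfeq p hp
      rw [hsub]
      have e1 : dist ((G (F ⟨p, hp⟩)) : ℝ × ℝ) p
          = dist (Φ (G (F ⟨p, hp⟩))) (Φ ⟨p, hp⟩) := by
        rw [hiso_l.dist_eq, Subtype.dist_eq]
      rw [e1]
      have t := dist_triangle (Φ (G (F ⟨p, hp⟩))) (Ψ (F ⟨p, hp⟩)) (Φ ⟨p, hp⟩)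
      have c1 := hG (F ⟨p, hp⟩)
      have c2 := hF ⟨p, hp⟩
      have c3 : dist (Ψ (F ⟨p, hp⟩)) (Φ ⟨p, hp⟩) = dist (Φ ⟨p, hp⟩) (Ψ (F ⟨p, hp⟩)) :=
        dist_comm _ _
      linarith
    have hfg : ∀ q ∈ Kset M y, dist (f (g q)) q ≤ 2*r := by
      intro q hq
      have hm : g q ∈ Kset M x := hgK q hq
      rw [hfeq _ hm]
      have hsub : (⟨g q, hm⟩ : ↥(Kset M x)) = G ⟨q, hq⟩ := by
        apply Subtype.ext
        exact hgeq q hq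
      rw [hsub]
      have e1 : dist ((F (G ⟨q, hq⟩)) : ℝ × ℝ) q
          = dist (Ψ (F (G ⟨q, hq⟩))) (Ψ ⟨q, hq⟩) := by
        rw [hiso_r.dist_eq, Subtype.dist_eq]
      rw [e1]
      have t := dist_triangle (Ψ (F (G ⟨q, hq⟩))) (Φ (G ⟨q, hq⟩)) (Ψ ⟨q, hq⟩)
      have c1 := hF (G ⟨q, hq⟩)
      have c2 := hG ⟨q, hq⟩
      have c3 : dist (Ψ (F (G ⟨q, hq⟩))) (Φ (G ⟨q, hq⟩))
          = dist (Φ (G ⟨q, hq⟩)) (Ψ (F (G ⟨q, hq⟩))) := dist_comm _ _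
      linarith
    have H : GHAux.Hyp M r x y f g :=
      ⟨hM, hr0, hrM, hx, hy, hfK, hgK, hdf, hdg, hgf, hfg⟩
    rw [dist_pi_le_iff hr0]
    intro n
    rw [Real.dist_eq]
    exact H.key n
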